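/- Let F be a field, r ≥ 0 and m ≥ 1 integers, and let D̃ = {a·e_i : a ∈ F, 1 ≤ i ≤ m} ⊆ F^m, where e_1, …, e_m is the standard basis of F^m. An r × m matrix P over F restricts to an injective map on D̃ if and only if every column of P is nonzero and no two distinct columns of P are linearly dependent (i.e., no column is a scalar multiple of a different column). -/
import Mathlib


open Matrix

lemma mulVec_smul_single {F : Type*} [Field F] {r m : ℕ}
    (P : Matrix (Fin r) (Fin m) F) (a : F) (i : Fin m) :
    P.mulVec (a • (Pi.single i (1 : F) : Fin m → F)) = a • (fun k => P k i) := by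
  ext k
  simp [mulVec_smul, mulVec_single]

/-- an `r × m` matrix `P` is injective on the vectorized Hamming
representative set `D̃ = {a·e_i : a ∈ F, 1 ≤ i ≤ m}` iff every column of `P` is nonzero
and no column is a scalar multiple of a different column. -/
theorem stmt_12 {F : Type*} [Field F] {r m : ℕ} (hm : 1 ≤ m)
    (P : Matrix (Fin r) (Fin m) F) :
    Set.InjOn P.mulVec
      {x : Fin m → F | ∃ (a : F) (i : Fin m), x = a • (Pi.single i (1 : F) : Fin m → F)} ↔
    ((∀ i : Fin m, (fun k => P k i) ≠ (0 : Fin r → F)) ∧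
      ∀ i j : Fin m, i ≠ j → ¬∃ c : F, (fun k => P k j) = c • (fun k => P k i)) := by
  constructor
  · intro hinj
    constructor
    · intro i hcol
      have m1 : ((1:F) • (Pi.single i (1:F) : Fin m → F)) ∈
          {x : Fin m → F | ∃ (a : F) (i : Fin m), x = a • (Pi.single i (1 : F) : Fin m → F)} :=
        ⟨1, i, rfl⟩
      have m2 : ((0:F) • (Pi.single i (1:F) : Fin m → F)) ∈
          {x : Fin m → F | ∃ (a : F) (i : Fin m), x = a • (Pi.single i (1 : F) : Fin m → F)} :=
        ⟨0, i, rfl⟩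
      have h := hinj m1 m2
        (by rw [mulVec_smul_single, mulVec_smul_single, hcol]; simp)
      have := congrFun h i
      simp [Pi.single_apply] at this
    · rintro i j hij ⟨c, hc⟩
      have m1 : ((1:F) • (Pi.single j (1:F) : Fin m → F)) ∈
          {x : Fin m → F | ∃ (a : F) (i : Fin m), x = a • (Pi.single i (1 : F) : Fin m → F)} :=
        ⟨1, j, rfl⟩
      have m2 : (c • (Pi.single i (1:F) : Fin m → F)) ∈
          {x : Fin m → F | ∃ (a : F) (i : Fin m), x = a • (Pi.single i (1 : F) : Fin m → F)} :=
        ⟨c, i, rfl⟩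
      have h := hinj m1 m2
        (by rw [mulVec_smul_single, mulVec_smul_single, hc]; simp)
      have := congrFun h j
      simp [Pi.single_apply, hij.symm] at this
  · rintro ⟨hcol, hdep⟩ x ⟨a, i, rfl⟩ y ⟨b, j, rfl⟩ hxy
    rw [mulVec_smul_single, mulVec_smul_single] at hxy
    by_cases hij : i = j
    · subst hij
      have : (a - b) • (fun k => P k i) = 0 := by
        rw [sub_smul, hxy, sub_self]
      rcases smul_eq_zero.mp this with h | h
      · rw [sub_eq_zero] at h; rw [h]
      · exact absurd h (hcol i)
    · by_cases hb : b = 0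
      · subst hb
        simp only [zero_smul] at hxy ⊢
        rcases smul_eq_zero.mp hxy with h | h
        · rw [h, zero_smul]
        · exact absurd h (hcol i)
      · exfalso
        exact hdep i j hij ⟨a / b, by
          funext k
          have := congrFun hxy k
          simp only [Pi.smul_apply, smul_eq_mul] at this ⊢
          rw [div_mul_eq_mul_div, eq_div_iff hb]
          linear_combination -this⟩
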